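/- Let U₁,…,Uₙ ≥ 0 and V₁,…,Vₙ be random variables (possibly dependent), Âₙ = n⁻¹Σ UᵢVᵢ, B̂ₙ = n⁻¹Σ Uᵢ, a = E[Âₙ], b = E[B̂ₙ] > 0, r = a/b. If |Âₙ/B̂ₙ| ≤ 1 almost surely, then |E[Âₙ/B̂ₙ] − r| ≤ (2b²)⁻¹ (3·E[(B̂ₙ − b)²] + E[(Âₙ − a)²]). -/

import Mathlib

open MeasureTheory

/-- Bias bound for a ratio estimator: if `|Âₙ/B̂ₙ| ≤ 1` a.s., then
`|E[Âₙ/B̂ₙ] − a/b| ≤ (2b²)⁻¹ (3 E[(B̂ₙ−b)²] + E[(Âₙ−a)²])`. -/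
theorem ratio_bias_bound
    {Ω : Type*} [MeasurableSpace Ω] (μ : Measure Ω) [IsProbabilityMeasure μ]
    (n : ℕ) (U V : Fin n → Ω → ℝ)
    (hU0 : ∀ i ω, 0 ≤ U i ω)
    (A B : Ω → ℝ)
    (hA : A = fun ω => (n : ℝ)⁻¹ * ∑ i, U i ω * V i ω)
    (hB : B = fun ω => (n : ℝ)⁻¹ * ∑ i, U i ω)
    (a b : ℝ) (ha : a = ∫ ω, A ω ∂μ) (hb : b = ∫ ω, B ω ∂μ) (hbpos : 0 < b)
    (hBpos : ∀ᵐ ω ∂μ, 0 < B ω)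
    (hratio : ∀ᵐ ω ∂μ, |A ω / B ω| ≤ 1)
    (hintR : Integrable (fun ω => A ω / B ω) μ)
    (hintA : Integrable A μ) (hintB : Integrable B μ)
    (hintA2 : Integrable (fun ω => (A ω - a) ^ 2) μ)
    (hintB2 : Integrable (fun ω => (B ω - b) ^ 2) μ) :
    |(∫ ω, A ω / B ω ∂μ) - a / b|
      ≤ (2 * b ^ 2)⁻¹ * (3 * (∫ ω, (B ω - b) ^ 2 ∂μ) + ∫ ω, (A ω - a) ^ 2 ∂μ) := by
  have hb0 : b ≠ 0 := ne_of_gt hbpos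
  have hb2 : (0:ℝ) < b ^ 2 := by positivity
  set g : Ω → ℝ :=
    fun ω => (A ω / B ω) * (B ω - b) ^ 2 / b ^ 2 + (A ω - a) * (b - B ω) / b ^ 2 with hgdef
  -- integrability of the two pieces of g
  have hg1 : Integrable (fun ω => (A ω / B ω) * (B ω - b) ^ 2 / b ^ 2) μ := by
    apply Integrable.mono (hintB2.div_const (b ^ 2))
    · exact (hintR.1.mul hintB2.1).mul aestronglyMeasurable_const
    · filter_upwards [hratio] with ω hω
      simp only [Real.norm_eq_abs]
      rw [abs_div, abs_div, abs_mul, abs_of_pos hb2,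
        abs_of_nonneg (sq_nonneg (B ω - b))]
      gcongr
      nlinarith [sq_nonneg (B ω - b), abs_nonneg (A ω / B ω)]
  have hg2 : Integrable (fun ω => (A ω - a) * (b - B ω) / b ^ 2) μ := by
    apply Integrable.mono
      (((hintA2.add hintB2).div_const (2 * b ^ 2)).congr
        (Filter.Eventually.of_forall fun ω => rfl))
    · exact ((hintA.sub (integrable_const a)).1.mul
        ((integrable_const b).sub hintB).1).mul aestronglyMeasurable_const
    · refine Filter.Eventually.of_forall fun ω => ?_
      simp only [Real.norm_eq_abs, Pi.add_apply, Pi.sub_apply]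
      rw [abs_div, abs_of_pos hb2, abs_div,
        abs_of_pos (by positivity : (0:ℝ) < 2 * b ^ 2),
        abs_of_nonneg (by positivity : (0:ℝ) ≤ (A ω - a) ^ 2 + (B ω - b) ^ 2),
        div_le_div_iff₀ hb2 (by positivity), abs_mul]
      have h1 := sq_nonneg (|A ω - a| - |b - B ω|)
      have h2 : |(A ω - a)| ^ 2 = (A ω - a) ^ 2 := sq_abs _
      have h3 : |(b - B ω)| ^ 2 = (B ω - b) ^ 2 := by rw [sq_abs]; ring
      nlinarith [abs_nonneg (A ω - a), abs_nonneg (b - B ω)]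
  have hgint : Integrable g μ := hg1.add hg2
  -- integrability of the linear part
  have e1 : Integrable (fun ω => a * (b - B ω) / b ^ 2) μ := by
    exact (((integrable_const b).sub hintB).const_mul a).div_const _
  have e2 : Integrable (fun ω => (A ω - a) / b) μ := by
    exact (hintA.sub (integrable_const a)).div_const _
  have hlin : Integrable (fun ω => a * (b - B ω) / b ^ 2 + (A ω - a) / b) μ := e1.add e2
  have hintBsub : ∫ ω, (b - B ω) ∂μ = 0 := by
    rw [integral_sub (integrable_const b) hintB, integral_const, probReal_univ, ← hb]
    simp
  have hintAsub : ∫ ω, (A ω - a) ∂μ = 0 := by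
    rw [integral_sub hintA (integrable_const a), integral_const, probReal_univ, ← ha]
    simp
  have hlin0 : ∫ ω, (a * (b - B ω) / b ^ 2 + (A ω - a) / b) ∂μ = 0 := by
    calc ∫ ω, (a * (b - B ω) / b ^ 2 + (A ω - a) / b) ∂μ
        = (∫ ω, a * (b - B ω) / b ^ 2 ∂μ) + ∫ ω, (A ω - a) / b ∂μ :=
          integral_add e1 e2
      _ = (∫ ω, a * (b - B ω) ∂μ) / b ^ 2 + (∫ ω, (A ω - a) ∂μ) / b := by
          rw [integral_div, integral_div]
      _ = (a * ∫ ω, (b - B ω) ∂μ) / b ^ 2 + (∫ ω, (A ω - a) ∂μ) / b := by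
          rw [integral_const_mul]
      _ = 0 := by rw [hintBsub, hintAsub]; simp
  -- key identity for the integral
  have key : (∫ ω, A ω / B ω ∂μ) - a / b = ∫ ω, g ω ∂μ := by
    have heq : ∀ᵐ ω ∂μ, A ω / B ω - a / b
        = g ω + (a * (b - B ω) / b ^ 2 + (A ω - a) / b) := by
      filter_upwards [hBpos] with ω hB0
      have hB0' : B ω ≠ 0 := ne_of_gt hB0
      simp only [hgdef]
      field_simp
      ring
    calc (∫ ω, A ω / B ω ∂μ) - a / b
        = ∫ ω, (A ω / B ω - a / b) ∂μ := by
          rw [integral_sub hintR (integrable_const _), integral_const, probReal_univ]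
          simp
      _ = ∫ ω, (g ω + (a * (b - B ω) / b ^ 2 + (A ω - a) / b)) ∂μ :=
          integral_congr_ae heq
      _ = (∫ ω, g ω ∂μ) + ∫ ω, (a * (b - B ω) / b ^ 2 + (A ω - a) / b) ∂μ :=
          integral_add hgint hlin
      _ = ∫ ω, g ω ∂μ := by rw [hlin0, add_zero]
  rw [key]
  -- bound
  have hh : Integrable (fun ω => (2 * b ^ 2)⁻¹ * (3 * (B ω - b) ^ 2 + (A ω - a) ^ 2)) μ :=
    ((hintB2.const_mul 3).add hintA2).const_mul _
  calc |∫ ω, g ω ∂μ| ≤ ∫ ω, |g ω| ∂μ := by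
        simpa using norm_integral_le_integral_norm g
    _ ≤ ∫ ω, (2 * b ^ 2)⁻¹ * (3 * (B ω - b) ^ 2 + (A ω - a) ^ 2) ∂μ := by
        refine integral_mono_ae hgint.abs hh ?_
        filter_upwards [hratio] with ω hω
        have h1 : |(A ω / B ω) * (B ω - b) ^ 2 / b ^ 2| ≤ (B ω - b) ^ 2 / b ^ 2 := by
          rw [abs_div, abs_mul, abs_of_pos hb2,
            abs_of_nonneg (sq_nonneg (B ω - b))]
          gcongr
          nlinarith [sq_nonneg (B ω - b), abs_nonneg (A ω / B ω)]
        have h2 : |(A ω - a) * (b - B ω) / b ^ 2|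
            ≤ ((A ω - a) ^ 2 + (B ω - b) ^ 2) / (2 * b ^ 2) := by
          rw [abs_div, abs_of_pos hb2, div_le_div_iff₀ hb2 (by positivity), abs_mul]
          have h1' := sq_nonneg (|A ω - a| - |b - B ω|)
          have h2' : |(A ω - a)| ^ 2 = (A ω - a) ^ 2 := sq_abs _
          have h3' : |(b - B ω)| ^ 2 = (B ω - b) ^ 2 := by rw [sq_abs]; ring
          nlinarith [abs_nonneg (A ω - a), abs_nonneg (b - B ω)]
        calc |g ω| ≤ |(A ω / B ω) * (B ω - b) ^ 2 / b ^ 2|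
              + |(A ω - a) * (b - B ω) / b ^ 2| := abs_add_le _ _
          _ ≤ (B ω - b) ^ 2 / b ^ 2 + ((A ω - a) ^ 2 + (B ω - b) ^ 2) / (2 * b ^ 2) :=
              add_le_add h1 h2
          _ = (2 * b ^ 2)⁻¹ * (3 * (B ω - b) ^ 2 + (A ω - a) ^ 2) := by
              field_simp; ring
    _ = (2 * b ^ 2)⁻¹ * ∫ ω, (3 * (B ω - b) ^ 2 + (A ω - a) ^ 2) ∂μ :=
        integral_const_mul _ _
    _ = (2 * b ^ 2)⁻¹ * ((∫ ω, 3 * (B ω - b) ^ 2 ∂μ) + ∫ ω, (A ω - a) ^ 2 ∂μ) := by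
        rw [integral_add (hintB2.const_mul 3) hintA2]
    _ = (2 * b ^ 2)⁻¹ * (3 * (∫ ω, (B ω - b) ^ 2 ∂μ) + ∫ ω, (A ω - a) ^ 2 ∂μ) := by
        rw [integral_const_mul]
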